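/- For n divisible by 4, the lattice D_n⁺ is self-dual: D_n⁺ = (D_n⁺)* where (D_n⁺)* = {y ∈ ℝⁿ : ⟨x,y⟩ ∈ ℤ for all x ∈ D_n⁺}. -/
import Mathlib


/-- The checkerboard lattice `Dₙ` viewed inside `ℝⁿ`. -/
def Dlat (m : ℕ) : Set (Fin m → ℝ) :=
  {x | ∃ z : Fin m → ℤ, (∀ i, x i = (z i : ℝ)) ∧ 2 ∣ ∑ i, z i}

/-- `Dₙ⁺ = Dₙ ∪ (Dₙ + (1/2,…,1/2))`. -/
def DlatPlus (m : ℕ) : Set (Fin m → ℝ) :=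
  Dlat m ∪ (((fun _ => (1:ℝ)/2) + ·) '' Dlat m)

/-- The dual (reciprocal) lattice of a set, via integrality of inner products. -/
def dualSet (m : ℕ) (S : Set (Fin m → ℝ)) : Set (Fin m → ℝ) :=
  {y | ∀ x ∈ S, ∃ k : ℤ, ∑ i, x i * y i = (k : ℝ)}

lemma sum_halves (n : ℕ) (z w : Fin n → ℝ) (a b : ℝ) :
    ∑ i, (z i + a) * (w i + b)
      = ∑ i, z i * w i + a * ∑ i, w i + b * ∑ i, z i + n * (a * b) := by
  have : ∀ i ∈ Finset.univ, (z i + a) * (w i + b)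
      = z i * w i + a * w i + b * z i + a * b := fun i _ => by ring
  rw [Finset.sum_congr rfl this]
  simp [Finset.sum_add_distrib, Finset.mul_sum]

lemma mem_form {n : ℕ} {x : Fin n → ℝ} (hx : x ∈ DlatPlus n) :
    ∃ (z : Fin n → ℤ) (e : ℤ), (∀ i, x i = (z i : ℝ) + (e : ℝ)/2) ∧ 2 ∣ ∑ i, z i := by
  rcases hx with ⟨z, hz, hs⟩ | ⟨x', ⟨z, hz, hs⟩, rfl⟩
  · exact ⟨z, 0, fun i => by simp [hz i], hs⟩
  · exact ⟨z, 1, fun i => by simp [hz i]; ring, hs⟩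

/-- For `n` divisible by 4, the lattice `Dₙ⁺` is self-dual. -/
theorem DnPlus_self_dual (n : ℕ) (hn : 4 ∣ n) :
    dualSet n (DlatPlus n) = DlatPlus n := by
  obtain ⟨m, rfl⟩ := hn
  ext y
  constructor
  · intro hy
    rcases Nat.eq_zero_or_pos m with rfl | hm
    · exact Or.inl ⟨fun _ => 0, fun i => i.elim0, by simp⟩
    have npos : 0 < 4 * m := by omega
    set i0 : Fin (4 * m) := ⟨0, npos⟩ with hi0
    -- each 2 * y i is an integer
    have h2 : ∀ i : Fin (4 * m), ∃ k : ℤ, 2 * y i = (k : ℝ) := by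
      intro i
      have hmem : (fun t => if t = i then (2:ℝ) else 0) ∈ DlatPlus (4 * m) :=
        Or.inl ⟨fun t => if t = i then 2 else 0, fun t => by by_cases h : t = i <;> simp [h],
          by simp [Finset.sum_ite_eq']⟩
      obtain ⟨k, hk⟩ := hy _ hmem
      refine ⟨k, ?_⟩
      rw [← hk]
      simp [ite_mul, Finset.sum_ite_eq']
    choose a ha using h2
    -- pairwise sums are integers
    have hpair : ∀ i j : Fin (4 * m), i ≠ j → ∃ k : ℤ, y i + y j = (k : ℝ) := by
      intro i j hij
      have hmem : (fun t => (if t = i then (1:ℝ) else 0) + (if t = j then 1 else 0))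
          ∈ DlatPlus (4 * m) :=
        Or.inl ⟨fun t => (if t = i then 1 else 0) + (if t = j then 1 else 0),
          fun t => by by_cases h : t = i <;> by_cases h2 : t = j <;> simp [h, h2],
          by simp [Finset.sum_add_distrib, Finset.sum_ite_eq']⟩
      obtain ⟨k, hk⟩ := hy _ hmem
      refine ⟨k, ?_⟩
      rw [← hk]
      simp [add_mul, ite_mul, Finset.sum_add_distrib, Finset.sum_ite_eq']
    -- sum of halves is integer
    have hhalf : ∃ k : ℤ, ∑ i, (1:ℝ)/2 * y i = (k : ℝ) := by
      apply hy
      exact Or.inr ⟨fun _ => 0, ⟨fun _ => 0, fun i => by simp, by simp⟩,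
        by funext i; simp⟩
    obtain ⟨k, hk⟩ := hhalf
    have hysum : ∑ i, y i = 2 * k := by
      rw [← Finset.mul_sum] at hk; linarith
    have hpar : ∀ i : Fin (4 * m), i ≠ i0 → Even (a i + a i0) := by
      intro i hi
      obtain ⟨c, hc⟩ := hpair i i0 hi
      have : ((a i + a i0 : ℤ) : ℝ) = ((2 * c : ℤ) : ℝ) := by
        push_cast
        rw [← ha, ← ha]
        linarith
      have := Int.cast_injective (α := ℝ) this
      exact ⟨c, by omega⟩
    rcases Int.even_or_odd (a i0) with h0 | h0
    · -- all integers
      have hev : ∀ i, Even (a i) := by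
        intro i
        by_cases hi : i = i0
        · rwa [hi]
        · have := hpar i hi
          rcases this with ⟨c, hc⟩
          rcases h0 with ⟨d, hd⟩
          exact ⟨c - d, by omega⟩
      choose w hw using hev
      have hyw : ∀ i, y i = (w i : ℝ) := by
        intro i
        have h1 := ha i
        have h2 : ((a i : ℤ) : ℝ) = (w i : ℝ) + (w i : ℝ) := by
          rw [hw i]; push_cast; ring
        rw [h2] at h1
        linarith
      refine Or.inl ⟨w, hyw, ?_⟩
      have : ((∑ i, w i : ℤ) : ℝ) = ((2 * k : ℤ) : ℝ) := by
        push_cast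
        rw [← hysum]
        exact Finset.sum_congr rfl fun i _ => (hyw i).symm
      exact ⟨k, Int.cast_injective (α := ℝ) this⟩
    · -- all half-integers
      have hodd : ∀ i, Odd (a i) := by
        intro i
        by_cases hi : i = i0
        · rwa [hi]
        · rcases hpar i hi with ⟨c, hc⟩
          rcases h0 with ⟨d, hd⟩
          exact ⟨c - d - 1, by omega⟩
      choose w hw using hodd
      have hyw : ∀ i, y i = (w i : ℝ) + 1/2 := by
        intro i
        have h1 := ha i
        have h2 : ((a i : ℤ) : ℝ) = 2 * (w i : ℝ) + 1 := by
          rw [hw i]; push_cast; ring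
        rw [h2] at h1
        linarith
      refine Or.inr ⟨fun i => (w i : ℝ), ⟨w, fun i => rfl, ?_⟩, ?_⟩
      · have : ((∑ i, w i : ℤ) : ℝ) = ((2 * (k - m) : ℤ) : ℝ) := by
          push_cast
          have hsy : ∑ i, y i = ∑ i, ((w i : ℝ) + 1/2) :=
            Finset.sum_congr rfl fun i _ => hyw i
          rw [Finset.sum_add_distrib] at hsy
          simp only [Finset.sum_const, Finset.card_univ, Fintype.card_fin,
            nsmul_eq_mul] at hsy
          rw [hysum] at hsy
          push_cast at hsy
          linarith
        exact ⟨k - m, Int.cast_injective (α := ℝ) this⟩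
      · funext i
        simp [hyw i]
        ring
  · intro hy x hx
    obtain ⟨z, e, hz, hzs⟩ := mem_form hx
    obtain ⟨w, f, hw, hws⟩ := mem_form hy
    obtain ⟨s, hs⟩ := hzs
    obtain ⟨t, ht⟩ := hws
    refine ⟨∑ i, z i * w i + e * t + f * s + m * e * f, ?_⟩
    have hsum : ∑ i, x i * y i
        = ∑ i, ((z i : ℝ) + (e:ℝ)/2) * ((w i : ℝ) + (f:ℝ)/2) :=
      Finset.sum_congr rfl fun i _ => by rw [hz i, hw i]
    rw [hsum, sum_halves]
    have h1 : (∑ i, (z i : ℝ)) = 2 * (s : ℝ) := by exact_mod_cast hs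
    have h2 : (∑ i, (w i : ℝ)) = 2 * (t : ℝ) := by exact_mod_cast ht
    rw [h1, h2]
    push_cast
    ring
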